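/- Let G be a group and H a subgroup of G of finite index which is a free group. Then every finite subgroup K of G satisfies |K| ≤ [G : H], i.e. Nat.card K ≤ H.index. -/

import Mathlib

lemma freeGroup_infinite_order {X : Type*} (x : X) (n : ℕ) (hn : n ≠ 0) :
    (FreeGroup.of x) ^ n ≠ 1 := by
  intro h
  set φ : FreeGroup X →* Multiplicative ℤ :=
    FreeGroup.lift (fun _ : X => Multiplicative.ofAdd (1 : ℤ)) with hφ
  have h2 : (Multiplicative.ofAdd (1 : ℤ)) ^ n = 1 := by
    have h1 := congrArg φ h
    rw [map_pow φ, map_one φ] at h1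
    rwa [hφ, FreeGroup.lift_apply_of] at h1
  have h3 := congrArg Multiplicative.toAdd h2
  simp at h3
  exact hn h3

lemma subsingleton_of_isFreeGroup_finite (F : Type*) [Group F] [IsFreeGroup F]
    [Finite F] : Subsingleton F := by
  constructor
  intro a b
  by_contra hab
  obtain ⟨x⟩ : Nonempty (IsFreeGroup.Generators F) := by
    by_contra hne
    rw [not_nonempty_iff] at hne
    have e := IsFreeGroup.toFreeGroup F
    have : Subsingleton (FreeGroup (IsFreeGroup.Generators F)) := by
      constructor
      intro g h
      apply FreeGroup.toWord_injective
      have hg : g.toWord = [] := List.eq_nil_of_length_eq_zero (by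
        cases hg : g.toWord with
        | nil => simp [hg]
        | cons p _ => exact hne.elim p.1)
      have hh : h.toWord = [] := List.eq_nil_of_length_eq_zero (by
        cases hh : h.toWord with
        | nil => simp [hh]
        | cons p _ => exact hne.elim p.1)
      rw [hg, hh]
    exact hab (e.injective (Subsingleton.elim _ _))
  have e := (IsFreeGroup.toFreeGroup F).symm
  have hord : ∀ n : ℕ, n ≠ 0 → (e (FreeGroup.of x)) ^ n ≠ 1 := by
    intro n hn h
    apply freeGroup_infinite_order x n hn
    have : e ((FreeGroup.of x) ^ n) = e 1 := by simpa using h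
    exact e.injective this
  have : IsOfFinOrder (e (FreeGroup.of x)) := isOfFinOrder_of_finite _
  obtain ⟨n, hn, hpow⟩ := this.exists_pow_eq_one
  exact hord n hn.ne' hpow

theorem card_finite_subgroup_le_index_of_free
    {G : Type*} [Group G] (H : Subgroup G) [H.FiniteIndex] [IsFreeGroup H]
    (K : Subgroup G) (hK : Finite K) :
    Nat.card K ≤ H.index := by
  classical
  -- the intersection K ⊓ H, as a subgroup of H, is finite and free, hence trivial
  have hfin : Finite (K.subgroupOf H) := by
    apply Finite.of_injective (fun g : K.subgroupOf H => (⟨((g : H) : G), g.2⟩ : K))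
    intro a b hab
    exact Subtype.ext (Subtype.ext (congrArg (fun k : K => (k : G)) hab))
  have hsub : Subsingleton (K.subgroupOf H) :=
    subsingleton_of_isFreeGroup_finite _
  -- hence the map K → G ⧸ H is injective
  have hinj : Function.Injective (fun k : K => QuotientGroup.mk (s := H) (k : G)) := by
    intro a b hab
    have h1 : (a : G)⁻¹ * b ∈ H := by
      rwa [QuotientGroup.eq] at hab
    have h2 : (a : G)⁻¹ * b ∈ K := K.mul_mem (K.inv_mem a.2) b.2
    have : (⟨⟨_, h1⟩, h2⟩ : K.subgroupOf H) = 1 := Subsingleton.elim _ _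
    have h3 : (a : G)⁻¹ * b = 1 := congrArg (Subtype.val ∘ Subtype.val) this
    ext
    exact (inv_mul_eq_one.mp h3)
  have : Finite (G ⧸ H) := Subgroup.finite_quotient_of_finiteIndex
  calc Nat.card K ≤ Nat.card (G ⧸ H) := Nat.card_le_card_of_injective _ hinj
    _ = H.index := rfl
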